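/- Let X ⊆ ℝ^n be a convex set, Ξ a measurable space, 𝒫 a convex set of probability measures on Ξ, and F : ℝ^n × 𝒫 → ℝ. Assume: (i) for each P ∈ 𝒫 the function F(·,P) is differentiable and α-strongly convex on X for some α > 0, i.e. (α/2)‖x−y‖² ≤ F(y,P) − F(x,P) − ⟨∇₁F(x,P), y−x⟩ for all x,y ∈ X; (ii) for each x ∈ X the function F(x,·) is concave on 𝒫, and there is dF(x;·;·) : 𝒫 × 𝒫 → ℝ with (F(x,(1−γ)·P + γ·Q) − F(x,P))/γ → dF(x;P;Q) as γ ↓ 0 for all P,Q ∈ 𝒫; (iii) dF(x;P;P_γ) + dF(x;P_γ;P) ≤ γ²·C₂ for all x ∈ X, P,Q ∈ 𝒫, γ ∈ [0,1], where P_γ := (1−γ)·P + γ·Q; (iv) dF(x;P;Q) − dF(y;P;Q) ≤ C₁·‖x−y‖ for all x,y ∈ X and P,Q ∈ 𝒫; (v) x : 𝒫 → X assigns to each P a minimizer of F(·,P) over X. Then for all P, Q ∈ 𝒫 and γ ∈ [0,1], with P_γ := (1−γ)·P + γ·Q: dF(x(P);P;P_γ) + dF(x(P_γ);P_γ;P)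 ≤ γ²·(C₂ + (C₁/(2α))·(C₁ + √(C₁² + 4·α·C₂))). -/

import Mathlib

open MeasureTheory Filter Set

/-- The mixture `(1-γ)·P + γ·Q` of two measures. -/
noncomputable def mix {Ξ : Type*} [MeasurableSpace Ξ] (P Q : Measure Ξ) (γ : ℝ) : Measure Ξ :=
  ENNReal.ofReal (1 - γ) • P + ENNReal.ofReal γ • Q

lemma mix_zero {Ξ : Type*} [MeasurableSpace Ξ] (P Q : Measure Ξ) : mix P Q 0 = P := by
  simp [mix]

lemma mix_self {Ξ : Type*} [MeasurableSpace Ξ] (P : Measure Ξ) {s : ℝ} (h0 : 0 ≤ s) (h1 : s ≤ 1) :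
    mix P P s = P := by
  rw [mix, ← add_smul, ← ENNReal.ofReal_add (by linarith) h0]
  norm_num

lemma mix_mix {Ξ : Type*} [MeasurableSpace Ξ] (P Q : Measure Ξ) {s γ : ℝ}
    (hs0 : 0 ≤ s) (hs1 : s ≤ 1) (hγ0 : 0 ≤ γ) (hγ1 : γ ≤ 1) :
    mix P (mix P Q γ) s = mix P Q (s * γ) := by
  rw [mix, mix, mix, smul_add, smul_smul, smul_smul, ← add_assoc, ← add_smul,
    ← ENNReal.ofReal_mul hs0, ← ENNReal.ofReal_mul hs0,
    ← ENNReal.ofReal_add (by linarith) (by nlinarith)]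
  ring_nf

lemma opt_grad {E : Type*} [NormedAddCommGroup E] [InnerProductSpace ℝ E] [CompleteSpace E]
    {X : Set E} (hX : Convex ℝ X) {f : E → ℝ} (hf : Differentiable ℝ f) {x y : E}
    (hx : x ∈ X) (hy : y ∈ X) (hmin : ∀ z ∈ X, f x ≤ f z) :
    (0:ℝ) ≤ inner ℝ (gradient f x) (y - x) := by
  have hgrad : (inner ℝ (gradient f x) (y - x) : ℝ) = fderiv ℝ f x (y - x) := by
    simp [gradient, InnerProductSpace.toDual_symm_apply]
  rw [hgrad]
  have h1 : HasDerivAt (fun t : ℝ => x + t • (y - x)) (y - x) 0 := by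
    simpa using ((hasDerivAt_id (0:ℝ)).smul_const (y - x)).const_add x
  have hd : HasDerivAt (fun t : ℝ => f (x + t • (y - x))) (fderiv ℝ f x (y - x)) 0 := by
    have hF : HasFDerivAt f (fderiv ℝ f x) (x + (0:ℝ) • (y - x)) := by
      simpa using (hf x).hasFDerivAt
    exact hF.comp_hasDerivAt 0 h1
  rw [hasDerivAt_iff_tendsto_slope] at hd
  have hd' := hd.mono_left (nhdsWithin_mono _ (fun t (ht : t ∈ Ioi (0:ℝ)) => ne_of_gt ht))
  refine ge_of_tendsto hd' ?_
  filter_upwards [Ioc_mem_nhdsGT_of_mem (by norm_num : (0:ℝ) ∈ Ico (0:ℝ) 1)] with t ht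
  have hmem : x + t • (y - x) ∈ X := by
    have := hX hx hy (by linarith [ht.2] : (0:ℝ) ≤ 1 - t) ht.1.le (by ring)
    convert this using 1
    module
  have := hmin _ hmem
  rw [slope_def_field]
  simp only [sub_zero, zero_smul, add_zero] at *
  exact div_nonneg (by linarith) ht.1.le


/-- Lemma 5.2(ii) (NDRO smoothness): under strong convexity in `x`, uniform `C₂`-smoothness
of the G-derivatives `dF` in the measure argument, and `C₁`-Lipschitz continuity of `dF`
in `x`, the risk measure `R(P) = min_{x∈X} F(x,P)` is `C`-smooth with
`C = C₂ + (C₁/(2α))(C₁ + √(C₁² + 4αC₂))`; by Danskin's theorem its G-derivative is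
`dR(P;Q) = dF(x(P);P;Q)`. -/
theorem NDRO_smoothness {n : ℕ} {Ξ : Type*} [MeasurableSpace Ξ]
    (X : Set (EuclideanSpace ℝ (Fin n))) (hXconv : Convex ℝ X)
    (Pset : Set (Measure Ξ)) (hprob : ∀ P ∈ Pset, IsProbabilityMeasure P)
    (hconvP : ∀ P ∈ Pset, ∀ Q ∈ Pset, ∀ γ ∈ Set.Icc (0 : ℝ) 1, mix P Q γ ∈ Pset)
    (F : EuclideanSpace ℝ (Fin n) → Measure Ξ → ℝ)
    (α : ℝ) (hα : 0 < α) (C₁ C₂ : ℝ) (hC₁ : 0 ≤ C₁) (hC₂ : 0 ≤ C₂)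
    (hFdiff : ∀ P ∈ Pset, Differentiable ℝ (fun x => F x P))
    (hsc : ∀ P ∈ Pset, ∀ x ∈ X, ∀ y ∈ X,
      α / 2 * ‖x - y‖ ^ 2 ≤
        F y P - F x P - (inner ℝ (gradient (fun z => F z P) x) (y - x) : ℝ))
    (hFconc : ∀ x ∈ X, ∀ P ∈ Pset, ∀ Q ∈ Pset, ∀ γ ∈ Set.Icc (0 : ℝ) 1,
      (1 - γ) * F x P + γ * F x Q ≤ F x (mix P Q γ))
    (dF : EuclideanSpace ℝ (Fin n) → Measure Ξ → Measure Ξ → ℝ)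
    (hdF : ∀ x ∈ X, ∀ P ∈ Pset, ∀ Q ∈ Pset,
      Tendsto (fun γ : ℝ => (F x (mix P Q γ) - F x P) / γ)
        (nhdsWithin (0 : ℝ) (Set.Ioi 0)) (nhds (dF x P Q)))
    (hsm : ∀ x ∈ X, ∀ P ∈ Pset, ∀ Q ∈ Pset, ∀ γ ∈ Set.Icc (0 : ℝ) 1,
      dF x P (mix P Q γ) + dF x (mix P Q γ) P ≤ γ ^ 2 * C₂)
    (hlip : ∀ x ∈ X, ∀ y ∈ X, ∀ P ∈ Pset, ∀ Q ∈ Pset,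
      dF x P Q - dF y P Q ≤ C₁ * ‖x - y‖)
    (xmin : Measure Ξ → EuclideanSpace ℝ (Fin n))
    (hxmem : ∀ P ∈ Pset, xmin P ∈ X)
    (hxmin : ∀ P ∈ Pset, ∀ y ∈ X, F (xmin P) P ≤ F y P) :
    ∀ P ∈ Pset, ∀ Q ∈ Pset, ∀ γ ∈ Set.Icc (0 : ℝ) 1,
      dF (xmin P) P (mix P Q γ) + dF (xmin (mix P Q γ)) (mix P Q γ) P ≤
        γ ^ 2 * (C₂ + C₁ / (2 * α) * (C₁ + Real.sqrt (C₁ ^ 2 + 4 * α * C₂))) := by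
  intro P hP Q hQ γ hγ
  -- dF z P P = 0
  have hself : ∀ z ∈ X, dF z P P = 0 := by
    intro z hz
    have t1 := hdF z hz P hP P hP
    have t2 : Tendsto (fun s : ℝ => (F z (mix P P s) - F z P) / s)
        (nhdsWithin (0:ℝ) (Set.Ioi 0)) (nhds 0) := by
      apply Tendsto.congr' ?_ tendsto_const_nhds
      filter_upwards [Ioc_mem_nhdsGT_of_mem (⟨le_refl 0, one_pos⟩ : (0:ℝ) ∈ Ico (0:ℝ) 1)]
        with s hs
      rw [mix_self P hs.1.le hs.2]
      simp
    exact tendsto_nhds_unique t1 t2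
  rcases eq_or_lt_of_le hγ.1 with h0 | hγpos
  · rw [← h0, mix_zero, hself (xmin P) (hxmem P hP)]
    norm_num
  -- main case : γ > 0
  have hM : mix P Q γ ∈ Pset := hconvP P hP Q hQ γ hγ
  have hxX : xmin P ∈ X := hxmem P hP
  have hyX : xmin (mix P Q γ) ∈ X := hxmem _ hM
  -- concavity bound on difference quotients
  have hB : ∀ z ∈ X, ∀ A ∈ Pset, ∀ B ∈ Pset, F z B - F z A ≤ dF z A B := by
    intro z hz A hA B hB'
    refine ge_of_tendsto (hdF z hz A hA B hB') ?_
    filter_upwards [Ioc_mem_nhdsGT_of_mem (⟨le_refl 0, one_pos⟩ : (0:ℝ) ∈ Ico (0:ℝ) 1)]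
      with s hs
    have hc := hFconc z hz A hA B hB' s ⟨hs.1.le, hs.2⟩
    rw [le_div_iff₀ hs.1]
    nlinarith [hc]
  -- scaling identity
  have hscale : ∀ z ∈ X, dF z P (mix P Q γ) = γ * dF z P Q := by
    intro z hz
    have t1 := hdF z hz P hP (mix P Q γ) hM
    have hmul : Tendsto (fun s : ℝ => s * γ)
        (nhdsWithin (0:ℝ) (Set.Ioi 0)) (nhdsWithin (0:ℝ) (Set.Ioi 0)) := by
      apply tendsto_nhdsWithin_of_tendsto_nhds_of_eventually_within
      · have h := (tendsto_id.mul_const γ : Tendsto (fun s : ℝ => s * γ) (nhds 0) (nhds (0 * γ)))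
        simpa using h.mono_left nhdsWithin_le_nhds
      · filter_upwards [self_mem_nhdsWithin] with s hs
        exact mul_pos hs hγpos
    have t2 : Tendsto (fun s : ℝ => γ * ((F z (mix P Q (s * γ)) - F z P) / (s * γ)))
        (nhdsWithin (0:ℝ) (Set.Ioi 0)) (nhds (γ * dF z P Q)) :=
      ((hdF z hz P hP Q hQ).comp hmul).const_mul γ
    have t3 : Tendsto (fun s : ℝ => (F z (mix P (mix P Q γ) s) - F z P) / s)
        (nhdsWithin (0:ℝ) (Set.Ioi 0)) (nhds (γ * dF z P Q)) := by
      apply t2.congr'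
      filter_upwards [Ioc_mem_nhdsGT_of_mem (⟨le_refl 0, one_pos⟩ : (0:ℝ) ∈ Ico (0:ℝ) 1)]
        with s hs
      rw [mix_mix P Q hs.1.le hs.2 hγpos.le hγ.2]
      field_simp [hγpos.ne', hs.1.ne']
    exact tendsto_nhds_unique t1 t3
  set x := xmin P
  set y := xmin (mix P Q γ)
  set δ := ‖x - y‖ with hδdef
  have hδ0 : 0 ≤ δ := norm_nonneg _
  -- quadratic growth at both minimizers
  have hg1 : α / 2 * δ ^ 2 ≤ F y P - F x P := by
    have h := hsc P hP x hxX y hyX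
    have hg := opt_grad hXconv (hFdiff P hP) hxX hyX (fun z hz => hxmin P hP z hz)
    linarith
  have hg2 : α / 2 * δ ^ 2 ≤ F x (mix P Q γ) - F y (mix P Q γ) := by
    have h := hsc (mix P Q γ) hM y hyX x hxX
    have hg := opt_grad hXconv (hFdiff (mix P Q γ) hM) hyX hxX (fun z hz => hxmin _ hM z hz)
    rw [hδdef, norm_sub_rev]
    linarith
  -- lower bound on the sum S
  have hS_lower : α * δ ^ 2 ≤ dF x P (mix P Q γ) + dF y (mix P Q γ) P := by
    have h1 := hB x hxX P hP (mix P Q γ) hM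
    have h2 := hB y hyX (mix P Q γ) hM P hP
    linarith
  -- upper bound on the sum S
  have hS_upper : dF x P (mix P Q γ) + dF y (mix P Q γ) P ≤ γ ^ 2 * C₂ + γ * C₁ * δ := by
    have hs1 := hsm y hyX P hP Q hQ γ hγ
    have hl := hlip x hxX y hyX P hP Q hQ
    rw [hscale x hxX]
    rw [hscale y hyX] at hs1
    nlinarith [hγpos.le]
  set s := Real.sqrt (C₁ ^ 2 + 4 * α * C₂) with hsdef
  have hs0 : 0 ≤ s := Real.sqrt_nonneg _
  have hssq : s ^ 2 = C₁ ^ 2 + 4 * α * C₂ := by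
    rw [hsdef, Real.sq_sqrt (by positivity)]
  have hq : α * δ ^ 2 ≤ γ ^ 2 * C₂ + γ * C₁ * δ := le_trans hS_lower hS_upper
  have hδbound : 2 * α * δ ≤ γ * (C₁ + s) := by
    nlinarith [hq, hssq, hs0, hγpos.le, hδ0, hα, hC₁, mul_nonneg hγpos.le hs0,
      sq_nonneg (2 * α * δ - γ * C₁ - γ * s)]
  have h2α : (0:ℝ) < 2 * α := by linarith
  have hfin : γ * C₁ * δ ≤ γ ^ 2 * (C₁ / (2 * α) * (C₁ + s)) := by
    rw [div_mul_eq_mul_div, ← mul_div_assoc, le_div_iff₀ h2α]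
    nlinarith [mul_le_mul_of_nonneg_left hδbound (mul_nonneg hγpos.le hC₁)]
  have hexp : γ ^ 2 * (C₂ + C₁ / (2 * α) * (C₁ + s)) =
      γ ^ 2 * C₂ + γ ^ 2 * (C₁ / (2 * α) * (C₁ + s)) := by ring
  rw [hexp]
  linarith
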